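/- If σ and σ' form a temporally periodic pair (maj_r(σ) = σ' and maj_r(σ') = σ), then σ and σ' have the same number of maximal homogeneous blocks; equivalently, they have the same number of switch points. -/

import Mathlib

open Finset

/-- Number of `true` cells in the radius-`r` neighborhood `[i-r, i+r]` of cell `i`. -/
def majCount (n r : ℕ) (σ : ZMod n → Bool) (i : ZMod n) : ℕ :=
  ((Finset.range (2 * r + 1)).filter (fun (t : ℕ) => σ (i - (r : ZMod n) + (t : ZMod n)) = true)).card

/-- The majority rule with radius `r`. -/
def maj (n r : ℕ) (σ : ZMod n → Bool) : ZMod n → Bool :=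
  fun i => decide (r + 1 ≤ majCount n r σ i)

/-- Number of cells with state `β` in the cyclic interval starting at `a` of length `L`. -/
def cnt (n : ℕ) (σ : ZMod n → Bool) (a : ZMod n) (L : ℕ) (β : Bool) : ℕ :=
  ((Finset.range L).filter (fun (t : ℕ) => σ (a + (t : ZMod n)) = β)).card

/-- `[a, a+L-1]` is a maximal homogeneous block of `σ`. -/
def IsBlock (n : ℕ) (σ : ZMod n → Bool) (a : ZMod n) (L : ℕ) : Prop :=
  0 < L ∧ L ≤ n ∧ (∀ t : ℕ, t < L → σ (a + (t : ZMod n)) = σ a) ∧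
    σ (a - 1) ≠ σ a ∧ σ (a + (L : ZMod n)) ≠ σ a

/-- Cell `c` lies in the cyclic interval starting at `a` of length `L`. -/
def InBlock (n : ℕ) (c a : ZMod n) (L : ℕ) : Prop :=
  ∃ t : ℕ, t < L ∧ c = a + (t : ZMod n)

lemma majCount_step (n r : ℕ) (σ : ZMod n → Bool) (i : ZMod n) :
    majCount n r σ i + (if σ (i + (r:ZMod n) + 1) = true then 1 else 0)
      = majCount n r σ (i+1) + (if σ (i - (r:ZMod n)) = true then 1 else 0) := by
  have key2 : (i - (r:ZMod n) + ((2*r+1 : ℕ) : ZMod n)) = i + (r:ZMod n) + 1 := by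
    push_cast; ring
  unfold majCount
  rw [Finset.card_filter, Finset.card_filter]
  have h1 : ∑ t ∈ Finset.range (2*r+1+1), (if σ (i - (r:ZMod n) + (t:ZMod n)) = true then 1 else 0)
      = (∑ t ∈ Finset.range (2*r+1), (if σ (i - (r:ZMod n) + (t:ZMod n)) = true then 1 else 0))
        + (if σ (i + (r:ZMod n) + 1) = true then 1 else 0) := by
    rw [Finset.sum_range_succ, key2]
  have h2 : ∑ t ∈ Finset.range (2*r+1+1), (if σ (i - (r:ZMod n) + (t:ZMod n)) = true then 1 else 0)
      = (∑ t ∈ Finset.range (2*r+1), (if σ (i + 1 - (r:ZMod n) + (t:ZMod n)) = true then 1 else 0))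
        + (if σ (i - (r:ZMod n)) = true then 1 else 0) := by
    rw [Finset.sum_range_succ']
    congr 1
    · refine Finset.sum_congr rfl (fun t _ => ?_)
      have : (i - (r:ZMod n) + ((t+1 : ℕ) : ZMod n)) = (i + 1 - (r:ZMod n) + (t : ZMod n)) := by
        push_cast; ring
      rw [this]
    · norm_num
  exact h1.symm.trans h2

lemma switch_src (n r : ℕ) (σ : ZMod n → Bool) (i : ZMod n)
    (h : maj n r σ i ≠ maj n r σ (i+1)) :
    σ (i - (r:ZMod n)) = maj n r σ i ∧ σ (i + (r:ZMod n) + 1) = maj n r σ (i+1) := by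
  have key := majCount_step n r σ i
  unfold maj at h ⊢
  by_cases h1 : r + 1 ≤ majCount n r σ i <;> by_cases h2 : r + 1 ≤ majCount n r σ (i+1) <;>
    simp [h1, h2] at h ⊢ <;>
    cases hb1 : σ (i - (r:ZMod n)) <;> cases hb2 : σ (i + (r:ZMod n) + 1) <;>
    simp [hb1, hb2] at key ⊢ <;> omega

lemma exists_switch_fwd {n : ℕ} [NeZero n] {σ : ZMod n → Bool} {x y : ZMod n}
    (hxy : σ x ≠ σ y) (a : ZMod n) :
    ∃ k : ℕ, σ (a + (k:ZMod n)) ≠ σ (a + (k:ZMod n) + 1) := by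
  by_contra hc
  push_neg at hc
  have hall : ∀ k : ℕ, σ (a + (k:ZMod n)) = σ a := by
    intro k
    induction k with
    | zero => simp
    | succ k ih =>
        have hcast : a + ((k+1 : ℕ) : ZMod n) = a + (k:ZMod n) + 1 := by push_cast; ring
        rw [hcast, ← hc k, ih]
  have hrep : ∀ z : ZMod n, σ z = σ a := by
    intro z
    have : a + (((z - a).val : ℕ) : ZMod n) = z := by
      rw [ZMod.natCast_rightInverse (z - a)]; ring
    rw [← this, hall]
  exact hxy ((hrep x).trans (hrep y).symm)

lemma const_upto {n : ℕ} {σ : ZMod n → Bool} {a : ZMod n} {K : ℕ}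
    (hmin : ∀ k, k < K → σ (a + (k:ZMod n)) = σ (a + (k:ZMod n) + 1)) :
    ∀ j, j ≤ K → σ (a + (j:ZMod n)) = σ a := by
  intro j hj
  induction j with
  | zero => simp
  | succ j ih =>
      have hcast : a + ((j+1 : ℕ) : ZMod n) = a + (j:ZMod n) + 1 := by push_cast; ring
      rw [hcast, ← hmin j (by omega), ih (by omega)]

lemma inj_aux (n r : ℕ) [NeZero n] (σ : ZMod n → Bool)
    (hs : ∀ a : ZMod n, ∃ k : ℕ, σ (a + (k:ZMod n)) ≠ σ (a + (k:ZMod n) + 1))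
    (t t' : ZMod n) (ht : maj n r σ t ≠ maj n r σ (t+1)) (ht' : maj n r σ t' ≠ maj n r σ (t'+1))
    (hle : Nat.find (hs (t' + (r:ZMod n) + 1)) ≤ Nat.find (hs (t + (r:ZMod n) + 1)))
    (heq : (t + (r:ZMod n) + 1) + ((Nat.find (hs (t + (r:ZMod n) + 1)) : ℕ) : ZMod n)
         = (t' + (r:ZMod n) + 1) + ((Nat.find (hs (t' + (r:ZMod n) + 1)) : ℕ) : ZMod n)) :
    t = t' := by
  set q := t + (r:ZMod n) + 1 with hq
  set q' := t' + (r:ZMod n) + 1 with hq'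
  set k := Nat.find (hs q) with hk
  set k' := Nat.find (hs q') with hk'
  set d := k - k' with hd
  rcases Nat.eq_zero_or_pos d with hd0 | hdpos
  · -- k = k', hence q = q', hence t = t'
    have hkk : k = k' := by omega
    have : q = q' := by
      have := heq
      rw [hkk] at this
      exact add_right_cancel this
    have : t + ((r:ZMod n) + 1) = t' + ((r:ZMod n) + 1) := by
      rw [← add_assoc, ← add_assoc]; rw [hq, hq'] at this; exact this
    exact add_right_cancel this
  · exfalso
    have hq'expr : q' = q + (d:ZMod n) := by
      have hcast : (k : ZMod n) = (k' : ZMod n) + (d : ZMod n) := by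
        have hkd : k' + d = k := by omega
        rw [← hkd]; push_cast; ring
      have h3 : q + (d:ZMod n) + (k':ZMod n) = q' + (k':ZMod n) := by
        linear_combination heq - hcast
      exact (add_right_cancel h3).symm
    have ht'expr : t' = t + (d:ZMod n) := by
      have : t + (d:ZMod n) + ((r:ZMod n) + 1) = t' + ((r:ZMod n) + 1) := by
        linear_combination -hq'expr
      exact (add_right_cancel this).symm
    have hconst : ∀ j, j ≤ k → σ (q + (j:ZMod n)) = σ q := by
      apply const_upto
      intro m hm
      have := Nat.find_min (hs q) (by rw [← hk]; exact hm)
      simpa using this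
    set τ := maj n r σ with hτ
    have hA := (switch_src n r σ t ht).2
    have hB := (switch_src n r σ t' ht').2
    -- σ q = τ (t+1), σ q' = τ (t'+1)
    have hσq : σ q = τ (t+1) := hA
    have hσq' : σ q' = τ (t'+1) := hB
    have hdk : d ≤ k := by omega
    have hqq' : σ q' = σ q := by rw [hq'expr]; exact hconst d hdk
    have hEq : τ (t'+1) = τ (t+1) := by rw [← hσq, ← hσq', hqq']
    have hNe : τ (t + (d:ZMod n)) ≠ τ (t+1) := by
      rw [← ht'expr]
      intro hcon
      exact ht' (by rw [hcon, hEq])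
    -- first change point
    have hex : ∃ m : ℕ, τ (t + ((m+1:ℕ):ZMod n)) ≠ τ (t+1) := by
      refine ⟨d - 1, ?_⟩
      have : d - 1 + 1 = d := by omega
      rw [this]
      exact hNe
    set m := Nat.find hex with hm
    have hspec : τ (t + ((m+1:ℕ):ZMod n)) ≠ τ (t+1) := Nat.find_spec hex
    have hm1 : 1 ≤ m := by
      rcases Nat.eq_zero_or_pos m with h0 | h; swap; · exact h
      exfalso
      apply hspec
      rw [h0]
      norm_num
    have hmled : m ≤ d - 1 := by
      apply Nat.find_le
      have : d - 1 + 1 = d := by omega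
      rw [this]
      exact hNe
    have hprev : τ (t + (m:ZMod n)) = τ (t+1) := by
      have := Nat.find_min hex (m := m - 1) (by omega)
      have hcast : m - 1 + 1 = m := by omega
      rw [hcast] at this
      simpa using this
    set u := t + (m:ZMod n) with hu
    have huswitch : τ u ≠ τ (u + 1) := by
      rw [hu]
      have hcast : t + (m:ZMod n) + 1 = t + ((m+1:ℕ):ZMod n) := by push_cast; ring
      rw [hcast, hprev]
      exact fun hcon => hspec hcon.symm
    have hC := (switch_src n r σ u huswitch).2
    -- σ (u + r + 1) = τ (u+1),  u + r + 1 = q + m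
    have hcast2 : u + (r:ZMod n) + 1 = q + (m:ZMod n) := by rw [hu, hq]; ring
    rw [hcast2, ← hτ] at hC
    have hmk : m ≤ k := by omega
    have : τ (u + 1) = σ q := by rw [← hC, hconst m hmk]
    rw [hu] at this
    have hcast3 : t + (m:ZMod n) + 1 = t + ((m+1:ℕ):ZMod n) := by push_cast; ring
    rw [hcast3] at this
    exact hspec (by rw [this, hσq])

lemma card_switch_maj_le (n r : ℕ) [NeZero n] (σ : ZMod n → Bool) :
    (Finset.univ.filter (fun i : ZMod n => maj n r σ i ≠ maj n r σ (i + 1))).card ≤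
      (Finset.univ.filter (fun i : ZMod n => σ i ≠ σ (i + 1))).card := by
  by_cases hT : ∀ i : ZMod n, maj n r σ i = maj n r σ (i+1)
  · have : (Finset.univ.filter (fun i : ZMod n => maj n r σ i ≠ maj n r σ (i + 1))) = ∅ := by
      apply Finset.filter_false_of_mem
      intro i _
      simpa using hT i
    simp [this]
  · push_neg at hT
    obtain ⟨t₀, ht₀⟩ := hT
    obtain ⟨hA0, hB0⟩ := switch_src n r σ t₀ ht₀
    have hxy : σ (t₀ - (r:ZMod n)) ≠ σ (t₀ + (r:ZMod n) + 1) := by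
      rw [hA0, hB0]; exact ht₀
    have hs : ∀ a : ZMod n, ∃ k : ℕ, σ (a + (k:ZMod n)) ≠ σ (a + (k:ZMod n) + 1) :=
      fun a => exists_switch_fwd hxy a
    apply Finset.card_le_card_of_injOn
      (fun t => (t + (r:ZMod n) + 1) + ((Nat.find (hs (t + (r:ZMod n) + 1)) : ℕ) : ZMod n))
    · intro t _
      simp only [Finset.mem_filter, Finset.mem_univ, true_and]
      exact Finset.mem_coe.mpr (Finset.mem_filter.mpr ⟨Finset.mem_univ _, Nat.find_spec (hs (t + (r:ZMod n) + 1))⟩)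
    · intro t ht t' ht' heq
      simp only [Finset.coe_filter, Set.mem_setOf_eq, Finset.mem_univ, true_and] at ht ht'
      rcases le_total (Nat.find (hs (t' + (r:ZMod n) + 1))) (Nat.find (hs (t + (r:ZMod n) + 1))) with h | h
      · exact inj_aux n r σ hs t t' ht ht' h heq
      · exact (inj_aux n r σ hs t' t ht' ht h heq.symm).symm

/-- The two configurations of a temporally periodic pair have the same number of
maximal homogeneous blocks (equivalently, the same number of switch points). -/
theorem periodic_pair_same_block_count (n r : ℕ) [NeZero n] (hr : 1 ≤ r)
    (σ σ' : ZMod n → Bool) (h1 : maj n r σ = σ') (h2 : maj n r σ' = σ) :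
    (Finset.univ.filter (fun i : ZMod n => σ i ≠ σ (i + 1))).card =
      (Finset.univ.filter (fun i : ZMod n => σ' i ≠ σ' (i + 1))).card := by
  have hle1 := card_switch_maj_le n r σ
  have hle2 := card_switch_maj_le n r σ'
  rw [h1] at hle1
  rw [h2] at hle2
  exact le_antisymm hle2 hle1
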